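/- For a quasi-graded poset (P,ρ,ζ̄) with 0̂ and 1̂, the ab-index satisfies the recursion Ψ([x,z]) = ζ̄(x,z)·(a−b)^{ρ(x,z)−1} + ∑_{x<y<z} Ψ([x,y])·b·ζ̄(y,z)·(a−b)^{ρ(y,z)−1}, for all x < z. -/

import Mathlib

open scoped Classical
open Finset

noncomputable section

/-- The free noncommutative algebra `ℚ⟨a,b⟩`. -/
abbrev QA : Type := FreeAlgebra ℚ Bool

/-- The variable `a`. -/
def av : QA := FreeAlgebra.ι ℚ true

/-- The variable `b`. -/
def bv : QA := FreeAlgebra.ι ℚ false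

/-- `c = a + b`. -/
def cvar : QA := av + bv

/-- `d = ab + ba`. -/
def dvar : QA := av * bv + bv * av

variable {α : Type*}

/-- The `ζ̄`-weight of a chain encoded as `f : Fin (k+1) → α`:
the product of the values of `ζ̄` on consecutive elements. -/
def chainZeta (ζ : α → α → ℚ) {k : ℕ} (f : Fin (k + 1) → α) : ℚ :=
  (List.ofFn (fun i : Fin k => ζ (f i.castSucc) (f i.succ))).prod

/-- The `ab`-weight of a chain: `(a-b)^{g₁-1} · b · (a-b)^{g₂-1} · b ⋯ b · (a-b)^{g_k-1}`
where `gᵢ` are the successive rank gaps along the chain. -/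
def chainWt (ρ : α → ℕ) {k : ℕ} (f : Fin (k + 1) → α) : QA :=
  (List.ofFn (fun i : Fin k =>
    (if (i : ℕ) = 0 then 1 else bv) *
      (av - bv) ^ (ρ (f i.succ) - ρ (f i.castSucc) - 1))).prod

/-- `f` encodes a (strict) chain from `x` to `z`. -/
def IsChainFrom [PartialOrder α] {k : ℕ} (f : Fin (k + 1) → α) (x z : α) : Prop :=
  StrictMono f ∧ f 0 = x ∧ f (Fin.last k) = z

/-- The ab-index `Ψ` of the interval `[x,z]` of a quasi-graded poset:
the sum over all chains from `x` to `z` of `ζ̄(c) · wt(c)`. -/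
def abIndex [PartialOrder α] [Fintype α] (ρ : α → ℕ) (ζ : α → α → ℚ) (x z : α) : QA :=
  ∑ k ∈ Finset.range (Fintype.card α), ∑ f : Fin (k + 1) → α,
    if IsChainFrom f x z then chainZeta ζ f • chainWt ρ f else 0

/-- `(P,ρ,ζ̄)` is a quasi-graded poset: `ρ` is strictly order-preserving and `ζ̄`
is an element of the incidence algebra with `ζ̄(x,x) = 1`. -/
def IsQuasiGraded [PartialOrder α] (ρ : α → ℕ) (ζ : α → α → ℚ) : Prop :=
  StrictMono ρ ∧ (∀ x, ζ x x = 1) ∧ ∀ x y : α, ¬ x ≤ y → ζ x y = 0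

/-- Convolution in the incidence algebra. -/
def iaMul [PartialOrder α] [Fintype α] (f g : α → α → ℚ) : α → α → ℚ :=
  fun x z => ∑ y ∈ Finset.univ.filter (fun y => x ≤ y ∧ y ≤ z), f x y * g y z

/-- The identity `δ` of the incidence algebra. -/
def iaDelta : α → α → ℚ := fun x z => if x = z then 1 else 0

/-- The Eulerian condition on the interval `[x,z]`:
`∑_{x ≤ y ≤ z} (-1)^{ρ(y)-ρ(x)} ζ̄(x,y) ζ̄(y,z) = δ_{x,z}`. -/
def EulerianAt [PartialOrder α] [Fintype α] (ρ : α → ℕ) (ζ : α → α → ℚ) (x z : α) : Prop :=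
  (∑ y ∈ Finset.univ.filter (fun y => x ≤ y ∧ y ≤ z),
    (-1 : ℚ) ^ (ρ y - ρ x) * ζ x y * ζ y z) = iaDelta x z

/-- `(P,ρ,ζ̄)` is Eulerian. -/
def IsEulerian [PartialOrder α] [Fintype α] (ρ : α → ℕ) (ζ : α → α → ℚ) : Prop :=
  ∀ x z : α, x ≤ z → EulerianAt ρ ζ x z

/-- The flag `f̄`-vector: `f̄_S = ∑_c ζ̄(c)` over chains from `x` to `z`
whose interior elements have ranks exactly `S`. -/
def flagF [PartialOrder α] [Fintype α] (ρ : α → ℕ) (ζ : α → α → ℚ)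
    (x z : α) (S : Finset ℕ) : ℚ :=
  ∑ k ∈ Finset.range (Fintype.card α), ∑ f : Fin (k + 1) → α,
    if IsChainFrom f x z ∧
        (Finset.univ.filter (fun i : Fin (k + 1) => i ≠ 0 ∧ i ≠ Fin.last k)).image
          (fun i => ρ (f i)) = S
      then chainZeta ζ f else 0

/-- The flag `h̄`-vector: `h̄_S = ∑_{T ⊆ S} (-1)^{|S-T|} f̄_T`. -/
def flagH [PartialOrder α] [Fintype α] (ρ : α → ℕ) (ζ : α → α → ℚ)
    (x z : α) (S : Finset ℕ) : ℚ :=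
  ∑ T ∈ S.powerset, (-1 : ℚ) ^ (S.card - T.card) * flagF ρ ζ x z T

/-- Chains with respect to an explicit strict relation `lt`. -/
def IsChainFromRel (lt : α → α → Prop) {k : ℕ} (f : Fin (k + 1) → α) (x z : α) : Prop :=
  (∀ i j : Fin (k + 1), i < j → lt (f i) (f j)) ∧ f 0 = x ∧ f (Fin.last k) = z

/-- The ab-index with respect to an explicit strict order relation `lt`. -/
def abIndexRel [Fintype α] (lt : α → α → Prop) (ρ : α → ℕ) (ζ : α → α → ℚ)
    (x z : α) : QA :=
  ∑ k ∈ Finset.range (Fintype.card α), ∑ f : Fin (k + 1) → α,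
    if IsChainFromRel lt f x z then chainZeta ζ f • chainWt ρ f else 0

/-- The Eulerian condition with respect to an explicit order relation `le`. -/
def IsEulerianRel [Fintype α] (le : α → α → Prop) (ρ : α → ℕ) (ζ : α → α → ℚ) : Prop :=
  ∀ x z : α, le x z →
    (∑ y ∈ Finset.univ.filter (fun y => le x y ∧ le y z),
      (-1 : ℚ) ^ (ρ y - ρ x) * ζ x y * ζ y z) = (if x = z then (1 : ℚ) else 0)

/-- Carrier of the zipped poset: remove `x` and `y`; the element `z` plays
the role of the new element `w`. -/
abbrev ZipCarrier (α : Type*) (x y : α) : Type _ := {u : α // u ≠ x ∧ u ≠ y}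

/-- The strict order of the zipped poset: `u <_Q w` iff `u < x` or `u < y`,
`w <_Q v` iff `x < v`, and otherwise the order is inherited from `P`. -/
def zipLt [PartialOrder α] (x y z : α) : ZipCarrier α x y → ZipCarrier α x y → Prop :=
  fun u v =>
    if u.1 = z then v.1 ≠ z ∧ x < v.1
    else if v.1 = z then u.1 < x ∨ u.1 < y
    else u.1 < v.1

/-- The (non-strict) order of the zipped poset. -/
def zipLe [PartialOrder α] (x y z : α) : ZipCarrier α x y → ZipCarrier α x y → Prop :=
  fun u v => zipLt x y z u v ∨ u = v

/-- The rank function of the zipped poset: `ρ_Q(w) = ρ(x)`, otherwise inherited. -/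
def zipRank [PartialOrder α] (ρ : α → ℕ) (x y z : α) : ZipCarrier α x y → ℕ :=
  fun u => if u.1 = z then ρ x else ρ u.1

/-- The weighted zeta function of the zipped poset:
`ζ̄_Q(w,v) = ζ̄(x,v)`, `ζ̄_Q(u,w) = ζ̄(u,x) + ζ̄(u,y) - ζ̄(u,z)`, otherwise inherited. -/
def zipZeta [PartialOrder α] (ζ : α → α → ℚ) (x y z : α) :
    ZipCarrier α x y → ZipCarrier α x y → ℚ :=
  fun u v =>
    if v.1 = z then (if u.1 = z then 1 else ζ u.1 x + ζ u.1 y - ζ u.1 z)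
    else if u.1 = z then ζ x v.1
    else ζ u.1 v.1

section AuxRecursion

variable {β : Type*}

lemma chainZeta_snoc' (ζ : β → β → ℚ) {k : ℕ} (g : Fin (k + 1) → β) (a : β) :
    chainZeta ζ (Fin.snoc g a) = chainZeta ζ g * ζ (g (Fin.last k)) a := by
  unfold chainZeta
  rw [List.ofFn_succ', List.prod_concat]
  simp [Fin.succ_castSucc, Fin.succ_last, -Fin.castSucc_succ]

lemma chainWt_snoc' (ρ : β → ℕ) {k : ℕ} (g : Fin (k + 1) → β) (a : β) :
    chainWt ρ (Fin.snoc g a) =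
      chainWt ρ g *
        ((if k = 0 then 1 else bv) * (av - bv) ^ (ρ a - ρ (g (Fin.last k)) - 1)) := by
  unfold chainWt
  rw [List.ofFn_succ', List.prod_concat]
  simp [Fin.succ_castSucc, Fin.succ_last, -Fin.castSucc_succ]

lemma fin_one_strictMono [Preorder β] (g : Fin 1 → β) : StrictMono g :=
  fun i j h => absurd (Subsingleton.elim i j) (Fin.ne_of_lt h)

lemma snoc_zero'' {k : ℕ} (g : Fin (k + 1) → β) (a : β) :
    (Fin.snoc g a : Fin (k + 2) → β) 0 = g 0 := by
  rw [← Fin.castSucc_zero, Fin.snoc_castSucc]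

lemma strictMono_snoc_iff [Preorder β] {k : ℕ} (g : Fin (k + 1) → β) (a : β) :
    StrictMono (Fin.snoc g a : Fin (k + 2) → β) ↔ StrictMono g ∧ g (Fin.last k) < a := by
  rw [Fin.strictMono_iff_lt_succ, Fin.strictMono_iff_lt_succ]
  constructor
  · intro h
    refine ⟨fun i => ?_, ?_⟩
    · have := h i.castSucc
      simpa [Fin.succ_castSucc, -Fin.castSucc_succ] using this
    · have := h (Fin.last k)
      simpa [Fin.succ_last] using this
  · rintro ⟨h1, h2⟩ i
    refine Fin.lastCases ?_ (fun j => ?_) i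
    · simpa [Fin.succ_last] using h2
    · simpa [Fin.succ_castSucc, -Fin.castSucc_succ] using h1 j

lemma snocEquiv_eq {n : ℕ} {β : Type*} (p : β × (Fin n → β)) :
    (Fin.snocEquiv (fun _ => β)) p = Fin.snoc p.2 p.1 := rfl

lemma isChainFrom_snoc_iff [PartialOrder β] {k : ℕ} (g : Fin (k + 1) → β) (a x z : β) :
    IsChainFrom (Fin.snoc g a : Fin (k + 2) → β) x z ↔
      a = z ∧ (StrictMono g ∧ g 0 = x ∧ g (Fin.last k) < z) := by
  unfold IsChainFrom
  rw [strictMono_snoc_iff, snoc_zero'', Fin.snoc_last]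
  constructor
  · rintro ⟨⟨hm, hlt⟩, h0, rfl⟩
    exact ⟨rfl, hm, h0, hlt⟩
  · rintro ⟨rfl, hm, h0, hlt⟩
    exact ⟨⟨hm, hlt⟩, h0, rfl⟩

end AuxRecursion

/-- the recursion for the ab-index:
`Ψ([x,z]) = ζ̄(x,z)(a-b)^{ρ(x,z)-1} + ∑_{x<y<z} Ψ([x,y])·b·ζ̄(y,z)(a-b)^{ρ(y,z)-1}`. -/
theorem abIndex_recursion {α : Type*} [Fintype α] [PartialOrder α] [BoundedOrder α]
    (ρ : α → ℕ) (ζ : α → α → ℚ) (hq : IsQuasiGraded ρ ζ)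
    (x z : α) (hxz : x < z) :
    abIndex ρ ζ x z =
      ζ x z • (av - bv) ^ (ρ z - ρ x - 1)
        + ∑ y ∈ Finset.univ.filter (fun y => x < y ∧ y < z),
            abIndex ρ ζ x y * bv * (ζ y z • (av - bv) ^ (ρ z - ρ y - 1)) := by
  classical
  have hnt : Nontrivial α := ⟨x, z, ne_of_lt hxz⟩
  obtain ⟨m, hm1, hN⟩ : ∃ m, 1 ≤ m ∧ Fintype.card α = m + 1 := by
    have h2 : 1 < Fintype.card α := Fintype.one_lt_card
    exact ⟨Fintype.card α - 1, by omega, by omega⟩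
  have hS0 : (∑ f : Fin (0 + 1) → α,
      if IsChainFrom f x z then chainZeta ζ f • chainWt ρ f else 0) = 0 := by
    refine Finset.sum_eq_zero fun f _ => ?_
    rw [if_neg]
    rintro ⟨-, h0, hl⟩
    refine (ne_of_lt hxz) ?_
    rw [← h0, ← hl]
    exact congrArg f (Fin.ext (by simp))
  have hS : ∀ k : ℕ,
      (∑ f : Fin (k + 1 + 1) → α,
          if IsChainFrom f x z then chainZeta ζ f • chainWt ρ f else 0)
        = ∑ g : Fin (k + 1) → α,
            if StrictMono g ∧ g 0 = x ∧ g (Fin.last k) < z then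
              (chainZeta ζ g * ζ (g (Fin.last k)) z) •
                (chainWt ρ g *
                  ((if k = 0 then 1 else bv) * (av - bv) ^ (ρ z - ρ (g (Fin.last k)) - 1)))
            else 0 := by
    intro k
    rw [← (Fin.snocEquiv (fun _ : Fin (k + 1 + 1) => α)).sum_comp
        (fun f => if IsChainFrom f x z then chainZeta ζ f • chainWt ρ f else 0),
      Fintype.sum_prod_type, Finset.sum_comm]
    refine Finset.sum_congr rfl fun g _ => ?_
    simp only [snocEquiv_eq]
    simp only [isChainFrom_snoc_iff, chainZeta_snoc', chainWt_snoc', ite_and]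
    rw [Finset.sum_ite_eq' Finset.univ z, if_pos (Finset.mem_univ z)]
  have hC : ∀ k : ℕ,
      (∑ g : Fin (k + 1) → α,
          if StrictMono g ∧ g 0 = x ∧ g (Fin.last k) < z then
            (chainZeta ζ g * ζ (g (Fin.last k)) z) •
              (chainWt ρ g *
                ((if k = 0 then 1 else bv) * (av - bv) ^ (ρ z - ρ (g (Fin.last k)) - 1)))
          else 0)
        = ∑ y ∈ Finset.univ.filter (fun y => x ≤ y ∧ y < z), ∑ g : Fin (k + 1) → α,
            if IsChainFrom g x y then
              (chainZeta ζ g * ζ y z) •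
                (chainWt ρ g * ((if k = 0 then 1 else bv) * (av - bv) ^ (ρ z - ρ y - 1)))
            else 0 := by
    intro k
    rw [Finset.sum_comm]
    refine Finset.sum_congr rfl fun g _ => ?_
    by_cases hg : StrictMono g ∧ g 0 = x ∧ g (Fin.last k) < z
    · rw [if_pos hg,
        Finset.sum_eq_single_of_mem (g (Fin.last k))
          (by
            simp only [Finset.mem_filter, Finset.mem_univ, true_and]
            exact ⟨hg.2.1 ▸ hg.1.monotone (Fin.zero_le _), hg.2.2⟩)
          (fun y _ hne => by
            rw [if_neg]
            intro h
            exact hne h.2.2.symm),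
        if_pos (show IsChainFrom g x (g (Fin.last k)) from ⟨hg.1, hg.2.1, rfl⟩)]
    · rw [if_neg hg]
      refine (Finset.sum_eq_zero fun y hy => ?_).symm
      rw [if_neg]
      intro h
      refine hg ⟨h.1, h.2.1, ?_⟩
      rw [h.2.2]
      exact (Finset.mem_filter.mp hy).2.2
  have hFx : Finset.univ.filter (fun y => x ≤ y ∧ y < z)
      = insert x (Finset.univ.filter (fun y : α => x < y ∧ y < z)) := by
    ext y
    simp only [Finset.mem_filter, Finset.mem_univ, true_and, Finset.mem_insert]
    constructor
    · rintro ⟨h1, h2⟩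
      rcases eq_or_lt_of_le h1 with h | h
      · exact Or.inl h.symm
      · exact Or.inr ⟨h, h2⟩
    · rintro (rfl | ⟨h1, h2⟩)
      · exact ⟨le_refl _, hxz⟩
      · exact ⟨le_of_lt h1, h2⟩
  have hxnot : x ∉ Finset.univ.filter (fun y : α => x < y ∧ y < z) := by simp
  have key : abIndex ρ ζ x z
      = ∑ y ∈ Finset.univ.filter (fun y => x ≤ y ∧ y < z), ∑ k ∈ Finset.range m,
          ∑ g : Fin (k + 1) → α,
            if IsChainFrom g x y then
              (chainZeta ζ g * ζ y z) •
                (chainWt ρ g * ((if k = 0 then 1 else bv) * (av - bv) ^ (ρ z - ρ y - 1)))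
            else 0 := by
    rw [abIndex, hN, Finset.sum_range_succ', hS0, add_zero]
    exact (Finset.sum_congr rfl fun k _ => (hS k).trans (hC k)).trans Finset.sum_comm
  have hTx : (∑ k ∈ Finset.range m, ∑ g : Fin (k + 1) → α,
      if IsChainFrom g x x then
        (chainZeta ζ g * ζ x z) •
          (chainWt ρ g * ((if k = 0 then 1 else bv) * (av - bv) ^ (ρ z - ρ x - 1)))
      else 0) = ζ x z • (av - bv) ^ (ρ z - ρ x - 1) := by
    rw [Finset.sum_eq_single_of_mem 0 (Finset.mem_range.mpr hm1)
      (fun k _ hkne => Finset.sum_eq_zero fun g _ => by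
        rw [if_neg]
        rintro ⟨h1, h2, h3⟩
        have hlt : (0 : Fin (k + 1)) < Fin.last k := by
          rw [Fin.lt_iff_val_lt_val]
          simpa using Nat.pos_of_ne_zero hkne
        have := h1 hlt
        rw [h2, h3] at this
        exact absurd this (lt_irrefl x))]
    rw [Fintype.sum_eq_single (fun _ : Fin 1 => x)
      (fun g hg => by
        rw [if_neg]
        rintro ⟨-, h0, -⟩
        exact hg (funext fun i => by rw [Subsingleton.elim i 0, h0]))]
    rw [if_pos (show IsChainFrom (fun _ : Fin 1 => x) x x from ⟨fin_one_strictMono _, rfl, rfl⟩)]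
    simp [chainZeta, chainWt]
  rw [key, hFx, Finset.sum_insert hxnot, hTx]
  congr 1
  refine Finset.sum_congr rfl fun y hy => ?_
  obtain ⟨hxy, hyz⟩ : x < y ∧ y < z := by simpa using hy
  have hfac : ∀ k : ℕ, (∑ g : Fin (k + 1) → α,
      if IsChainFrom g x y then
        (chainZeta ζ g * ζ y z) •
          (chainWt ρ g * ((if k = 0 then 1 else bv) * (av - bv) ^ (ρ z - ρ y - 1)))
      else 0)
      = (∑ g : Fin (k + 1) → α, if IsChainFrom g x y then chainZeta ζ g • chainWt ρ g else 0)
          * (bv * (ζ y z • (av - bv) ^ (ρ z - ρ y - 1))) := by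
    intro k
    rw [Finset.sum_mul]
    refine Finset.sum_congr rfl fun g _ => ?_
    by_cases hg : IsChainFrom g x y
    · rw [if_pos hg, if_pos hg]
      have hk0 : k ≠ 0 := by
        rintro rfl
        refine (ne_of_lt hxy) ?_
        rw [← hg.2.1, ← hg.2.2]
        exact congrArg g (Fin.ext (by simp))
      rw [if_neg hk0]
      simp only [smul_mul_assoc, mul_smul_comm, smul_smul]
      rw [mul_comm (ζ y z) (chainZeta ζ g)]
    · rw [if_neg hg, if_neg hg, zero_mul]
  have habk : abIndex ρ ζ x y = ∑ k ∈ Finset.range m, ∑ g : Fin (k + 1) → α,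
      if IsChainFrom g x y then chainZeta ζ g • chainWt ρ g else 0 := by
    rw [abIndex, hN, Finset.sum_range_succ]
    have hlast : (∑ g : Fin (m + 1) → α,
        if IsChainFrom g x y then chainZeta ζ g • chainWt ρ g else 0) = 0 := by
      refine Finset.sum_eq_zero fun g _ => ?_
      rw [if_neg]
      rintro ⟨h1, h2, h3⟩
      have hbij : Function.Bijective g :=
        (Fintype.bijective_iff_injective_and_card g).mpr ⟨h1.injective, by simp [hN]⟩
      obtain ⟨i, hi⟩ := hbij.2 z
      have hzy : z ≤ y := by
        rw [← hi, ← h3]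
        exact h1.monotone (Fin.le_last i)
      exact absurd (lt_of_le_of_lt hzy hyz) (lt_irrefl z)
    rw [hlast, add_zero]
  rw [mul_assoc, habk, Finset.sum_mul]
  exact Finset.sum_congr rfl fun k _ => hfac k
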